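/- If N is a finite normal subgroup of a direct product A × B and B is an icc group, then N is contained in A × {1}. -/
import Mathlib


/-- A finite normal subgroup of A × B with B icc is contained in A × {1}. -/
theorem stmt5 (A B : Type*) [Group A] [Group B]
    (hB : ∀ b : B, b ≠ 1 → {x : B | ∃ h : B, h * b * h⁻¹ = x}.Infinite)
    (N : Subgroup (A × B)) (hN : N.Normal) (hfin : (N : Set (A × B)).Finite) :
    N ≤ (⊤ : Subgroup A).prod ⊥ := by
  rintro ⟨a, b⟩ hn
  refine Subgroup.mem_prod.2 ⟨trivial, ?_⟩
  by_contra hb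
  have hinf : {x : B | ∃ h : B, h * b * h⁻¹ = x}.Infinite := hB b hb
  have himg : ((fun x : B => (a, x)) '' {x : B | ∃ h : B, h * b * h⁻¹ = x}) ⊆ (N : Set (A × B)) := by
    rintro ⟨a', x⟩ ⟨x', ⟨h, hx⟩, hxeq⟩
    obtain ⟨rfl, rfl⟩ := Prod.mk.injEq .. ▸ hxeq
    have := hN.conj_mem _ hn (1, h)
    simpa [mul_assoc, hx] using this
  exact (hfin.subset himg).not_infinite
    (hinf.image (fun x _ y _ h => (Prod.mk.injEq .. ▸ h).2))
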